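/- arXiv:2209.00919 — 2 statements merged into one kernel-verified Lean document; each statement's English description precedes it below -/
import Mathlib

section
/- Let 𝔽_q be a finite field of characteristic 2, let c, d ∈ 𝔽_q and b, η ∈ 𝔽_q^×, and set f₁(X) := ηb²X⁴ + ηc²X² + dX and f₂(X) := ηd²X⁴ + ηc²X² + bX. Then the number of roots of f₁ in 𝔽_q equals the number of roots of f₂ in 𝔽_q, i.e. |{x ∈ 𝔽_q : f₁(x) = 0}| = |{x ∈ 𝔽_q : f₂(x) = 0}|. -/
/-- Let `𝔽_q` be a finite field of characteristic 2, `c d ∈ 𝔽_q`,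
`b η ∈ 𝔽_q^×`, and set `f₁(X) = ηb²X⁴ + ηc²X² + dX`, `f₂(X) = ηd²X⁴ + ηc²X² + bX`. Then
`f₁` and `f₂` have the same number of roots in `𝔽_q`. -/
theorem statement17 (F : Type*) [Field F] [Fintype F] [CharP F 2]
    (c d b η : F) (hb : b ≠ 0) (hη : η ≠ 0) :
    {x : F | η * b ^ 2 * x ^ 4 + η * c ^ 2 * x ^ 2 + d * x = 0}.ncard =
      {x : F | η * d ^ 2 * x ^ 4 + η * c ^ 2 * x ^ 2 + b * x = 0}.ncard := by
  rcases eq_or_ne d 0 with hd | hd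
  · subst hd
    have h2 : (2 : F) = 0 := by exact_mod_cast CharP.cast_eq_zero F 2
    rcases eq_or_ne c 0 with hc | hc
    · subst hc
      have hA : {x : F | η * b ^ 2 * x ^ 4 + η * 0 ^ 2 * x ^ 2 + 0 * x = 0} = {0} := by
        ext x
        simp only [Set.mem_setOf_eq, Set.mem_singleton_iff]
        constructor
        · intro h
          have h4 : η * b ^ 2 * x ^ 4 = 0 := by linear_combination h
          simpa [mul_eq_zero, hη, hb, pow_eq_zero_iff] using h4
        · rintro rfl; ring
      have hB : {x : F | η * 0 ^ 2 * x ^ 4 + η * 0 ^ 2 * x ^ 2 + b * x = 0} = {0} := by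
        ext x
        simp only [Set.mem_setOf_eq, Set.mem_singleton_iff]
        constructor
        · intro h
          have h4 : b * x = 0 := by linear_combination h
          exact (mul_eq_zero.mp h4).resolve_left hb
        · rintro rfl; ring
      rw [hA, hB]
    · have hc2 : η * c ^ 2 ≠ 0 := mul_ne_zero hη (pow_ne_zero 2 hc)
      have hA : {x : F | η * b ^ 2 * x ^ 4 + η * c ^ 2 * x ^ 2 + 0 * x = 0} = {0, c / b} := by
        ext x
        simp only [Set.mem_setOf_eq, Set.mem_insert_iff, Set.mem_singleton_iff]
        constructor
        · intro h
          have hsq : η * (x * (b * x + c)) ^ 2 = 0 := by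
            linear_combination h + η * b * c * x ^ 3 * h2
          have hx : x * (b * x + c) = 0 := by
            rcases mul_eq_zero.mp hsq with h' | h'
            · exact absurd h' hη
            · exact pow_eq_zero_iff (by norm_num) |>.mp h'
          rcases mul_eq_zero.mp hx with h' | h'
          · exact Or.inl h'
          · right
            field_simp
            linear_combination h' - c * h2
        · rintro (rfl | rfl)
          · ring
          · field_simp
            linear_combination c ^ 4 * η * h2
      have hB : {x : F | η * 0 ^ 2 * x ^ 4 + η * c ^ 2 * x ^ 2 + b * x = 0}
          = {0, b / (η * c ^ 2)} := by
        ext x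
        simp only [Set.mem_setOf_eq, Set.mem_insert_iff, Set.mem_singleton_iff]
        constructor
        · intro h
          have hx : x * (η * c ^ 2 * x + b) = 0 := by linear_combination h
          rcases mul_eq_zero.mp hx with h' | h'
          · exact Or.inl h'
          · right
            field_simp
            linear_combination h' - b * h2
        · rintro (rfl | rfl)
          · ring
          · field_simp
            linear_combination b ^ 2 * η ^ 2 * c ^ 6 * h2
      rw [hA, hB, Set.ncard_pair, Set.ncard_pair]
      · exact (div_ne_zero hb hc2).symm
      · exact (div_ne_zero hc hb).symm
  · have key : ∀ x : F,
        η * b ^ 2 * (d / b * x) ^ 4 + η * c ^ 2 * (d / b * x) ^ 2 + d * (d / b * x)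
          = d ^ 2 / b ^ 2 * (η * d ^ 2 * x ^ 4 + η * c ^ 2 * x ^ 2 + b * x) := by
      intro x
      field_simp
    have hdb : d ^ 2 / b ^ 2 ≠ 0 := div_ne_zero (pow_ne_zero 2 hd) (pow_ne_zero 2 hb)
    have himg : {x : F | η * d ^ 2 * x ^ 4 + η * c ^ 2 * x ^ 2 + b * x = 0}
        = (fun x => b / d * x) '' {x : F | η * b ^ 2 * x ^ 4 + η * c ^ 2 * x ^ 2 + d * x = 0} := by
      ext x
      simp only [Set.mem_setOf_eq, Set.mem_image]
      constructor
      · intro h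
        refine ⟨d / b * x, ?_, by field_simp⟩
        rw [key x, h, mul_zero]
      · rintro ⟨y, hy, rfl⟩
        have e : d / b * (b / d * y) = y := by field_simp
        have h := key (b / d * y)
        rw [e, hy] at h
        exact ((mul_eq_zero.mp h.symm).resolve_left hdb)
    rw [himg, Set.ncard_image_of_injective]
    intro a₁ a₂ h
    exact mul_left_cancel₀ (div_ne_zero hb hd) h
end

section
/- Let G be a finite group, N a normal subgroup of G, and H an abelian subgroup of G with G = NH. Let H₀ be a subgroup of H and let χ: N → ℂ^× be a one-dimensional representation of N such that the induced representation Ind_N^{NH₀}(χ) is irreducible and is stabilized by G (i.e. its conjugate by every g ∈ G is equivalent to itself). Then Ind_N^{NH₀}(χ) extends to a representation of G. -/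
noncomputable section

/-- Isomorphism (equivalence) of two representations of `G`, possibly on different spaces. -/
def RepIso {G : Type*} [Group G] {V W : Type*} [AddCommGroup V] [Module ℂ V]
    [AddCommGroup W] [Module ℂ W] (ρ : Representation ℂ G V) (σ : Representation ℂ G W) : Prop :=
  ∃ e : V ≃ₗ[ℂ] W, ∀ (g : G) (v : V), e (ρ g v) = σ g (e v)

/-- Irreducibility of a representation: the space is nonzero and has no proper nonzero
invariant subspaces. -/
def IsIrreducibleRep {G : Type*} [Group G] {V : Type*} [AddCommGroup V] [Module ℂ V]
    (ρ : Representation ℂ G V) : Prop :=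
  Nontrivial V ∧
    ∀ U : Submodule ℂ V, (∀ (g : G) (v : V), v ∈ U → ρ g v ∈ U) → U = ⊥ ∨ U = ⊤

/-- For subgroups `K ≤ C` of `G`, a one-dimensional character `χ` of `K`, and a representation
`ρ` of `C`: `ρ` lies above `χ` (i.e. `χ` is a constituent of the restriction of `ρ` to `K`;
equivalently, `ρ` is a constituent of the representation induced from `χ`). -/
def liesAboveChar {G : Type*} [Group G] {K C : Subgroup G} (hKC : K ≤ C)
    {V : Type*} [AddCommGroup V] [Module ℂ V] (χ : K →* ℂˣ)
    (ρ : Representation ℂ C V) : Prop :=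
  ∃ v : V, v ≠ 0 ∧ ∀ k : K, ρ ⟨(k : G), hKC k.2⟩ v = (χ k : ℂ) • v

/-- For subgroups `D ≤ C` of `G`, a representation `φ` of `D` and a representation `ρ` of `C`:
`ρ` lies above `φ` (there is a nonzero intertwiner `φ → ρ|_D`). -/
def liesAboveRep {G : Type*} [Group G] {D C : Subgroup G} (hDC : D ≤ C)
    {V W : Type*} [AddCommGroup V] [Module ℂ V] [AddCommGroup W] [Module ℂ W]
    (φ : Representation ℂ D W) (ρ : Representation ℂ C V) : Prop :=
  ∃ T : W →ₗ[ℂ] V, T ≠ 0 ∧ ∀ (d : D) (w : W), T (φ d w) = ρ ⟨(d : G), hDC d.2⟩ (T w)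

section Induction

variable {G : Type*} [Group G] {H : Subgroup G} {W : Type*} [AddCommGroup W] [Module ℂ W]

/-- Carrier of the representation of `G` induced from the representation `σ` of the
subgroup `H`. -/
def indCarrier (σ : Representation ℂ H W) : Submodule ℂ (G → W) where
  carrier := {f | ∀ (h : H) (g : G), f ((h : G) * g) = σ h (f g)}
  add_mem' := by
    intro f g hf hg h x
    simp only [Pi.add_apply, hf h x, hg h x, map_add]
  zero_mem' := by
    intro h x
    simp
  smul_mem' := by
    intro c f hf h x
    simp only [Pi.smul_apply, hf h x, map_smul]

/-- The representation of `G` induced from the representation `σ` of the subgroup `H`. -/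
def ind (σ : Representation ℂ H W) : Representation ℂ G (indCarrier σ) where
  toFun g₀ :=
    { toFun := fun f => ⟨fun g => f.1 (g * g₀), fun h x => by
        have := f.2 h (x * g₀)
        simpa [mul_assoc] using this⟩
      map_add' := by intro f g; rfl
      map_smul' := by intro c f; rfl }
  map_one' := by
    apply LinearMap.ext
    intro f
    apply Subtype.ext
    funext g
    simp
  map_mul' := by
    intro a b
    apply LinearMap.ext
    intro f
    apply Subtype.ext
    funext g
    simp [mul_assoc]

end Induction

/-- The one-dimensional representation on `ℂ` attached to a character `χ : G →* ℂˣ`. -/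
def charRep {G : Type*} [Group G] (χ : G →* ℂˣ) : Representation ℂ G ℂ :=
  (DistribMulAction.toModuleEnd ℂ ℂ).comp χ

/-- Conjugation automorphism of a subgroup `K` by an element `g` normalizing `K`. -/
def conjHom {G : Type*} [Group G] (K : Subgroup G) (g : G)
    (h : ∀ k ∈ K, g * k * g⁻¹ ∈ K) : K →* K where
  toFun k := ⟨g * (k : G) * g⁻¹, h _ k.2⟩
  map_one' := by ext; simp
  map_mul' := by
    intro a b
    ext
    simp only [Subgroup.coe_mul, Subgroup.coe_mk]
    group

/-- Number of irreducible complex representations of `G` of dimension `d`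
(counted up to equivalence, realized on the model space `Fin d → ℂ`). -/
def numIrrepsOfDim (G : Type*) [Group G] (d : ℕ) : ℕ :=
  Nat.card (Quot (fun ρ₁ ρ₂ : {ρ : Representation ℂ G (Fin d → ℂ) // IsIrreducibleRep ρ} =>
    RepIso ρ₁.1 ρ₂.1))

/-- The representation `Ind_N^{NH₀}(χ)` of the subgroup `N ⊔ H₀ = NH₀` (for `N` normal)
induced from the one-dimensional representation `χ` of `N`. -/
def indToJoin {G : Type*} [Group G] (N H₀ : Subgroup G) (χ : N →* ℂˣ) :
    Representation ℂ ↥(N ⊔ H₀)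
      (indCarrier (charRep (χ.comp
        (Subgroup.subgroupOfEquivOfLe (le_sup_left : N ≤ N ⊔ H₀)).toMonoidHom))) :=
  ind _

section CharExt

variable {A : Type*} [CommGroup A] [Finite A]

lemma card_lt_of_lt {B₁ B₂ : Subgroup A} (h : B₁ < B₂) : Nat.card ↥B₁ < Nat.card ↥B₂ := by
  have h1 : Nat.card ↥B₁ = (B₁ : Set A).ncard := Nat.card_coe_set_eq _
  have h2 : Nat.card ↥B₂ = (B₂ : Set A).ncard := Nat.card_coe_set_eq _
  rw [h1, h2]
  exact Set.ncard_lt_ncard (by exact_mod_cast h) (Set.toFinite _)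

lemma exists_char_extension_aux (n : ℕ) :
    ∀ B : Subgroup A, Nat.card A - Nat.card ↥B ≤ n → ∀ f : ↥B →* ℂˣ,
      ∃ g : A →* ℂˣ, ∀ b : ↥B, g b = f b := by
  induction n with
  | zero =>
    intro B hB f
    have hBtop : B = ⊤ := by
      by_contra h
      have := card_lt_of_lt (lt_of_le_of_ne le_top h)
      have htop : Nat.card ↥(⊤ : Subgroup A) = Nat.card A := Nat.card_congr
        (Equiv.subtypeUnivEquiv (fun x => Subgroup.mem_top x))
      omega
    subst hBtop
    exact ⟨{ toFun := fun a => f ⟨a, Subgroup.mem_top a⟩,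
             map_one' := f.map_one,
             map_mul' := fun a b => f.map_mul ⟨a, Subgroup.mem_top a⟩ ⟨b, Subgroup.mem_top b⟩ },
           fun b => congrArg f (Subtype.ext rfl)⟩
  | succ n ih =>
    intro B hB f
    by_cases hBtop : B = ⊤
    · subst hBtop
      exact ⟨{ toFun := fun a => f ⟨a, Subgroup.mem_top a⟩,
               map_one' := f.map_one,
               map_mul' := fun a b => f.map_mul ⟨a, Subgroup.mem_top a⟩ ⟨b, Subgroup.mem_top b⟩ },
             fun b => congrArg f (Subtype.ext rfl)⟩
    · obtain ⟨x, hx⟩ : ∃ x, x ∉ B := by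
        by_contra h
        push_neg at h
        exact hBtop (Subgroup.ext fun y => ⟨fun _ => Subgroup.mem_top y, fun _ => h y⟩)
      set m := orderOf ((x : A) : A ⧸ B) with hmdef
      have hm : 0 < m := orderOf_pos _
      have hxm : x ^ m ∈ B := by
        have h1 : ((x : A) : A ⧸ B) ^ m = 1 := pow_orderOf_eq_one _
        rwa [← QuotientGroup.mk_pow, QuotientGroup.eq_one_iff] at h1
      obtain ⟨z, hz⟩ := IsAlgClosed.exists_pow_nat_eq (k := ℂ) ((f ⟨x ^ m, hxm⟩ : ℂˣ) : ℂ) hm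
      have hz0 : z ≠ 0 := by
        intro h
        rw [h, zero_pow hm.ne'] at hz
        exact (Units.ne_zero _) hz.symm
      set zu : ℂˣ := Units.mk0 z hz0 with hzudef
      have hzu : zu ^ m = f ⟨x ^ m, hxm⟩ := Units.ext (by simpa [hzudef] using hz)
      set φ : ↥B × Multiplicative ℤ →* A :=
        (B.subtype.comp (MonoidHom.fst _ _)) * ((zpowersHom A x).comp (MonoidHom.snd _ _))
        with hφdef
      have hφ : ∀ p : ↥B × Multiplicative ℤ, φ p = (p.1 : A) * x ^ (Multiplicative.toAdd p.2) :=
        fun p => rfl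
      set ψ : ↥B × Multiplicative ℤ →* ℂˣ :=
        (f.comp (MonoidHom.fst _ _)) * ((zpowersHom ℂˣ zu).comp (MonoidHom.snd _ _)) with hψdef
      have hψ : ∀ p : ↥B × Multiplicative ℤ, ψ p = f p.1 * zu ^ (Multiplicative.toAdd p.2) :=
        fun p => rfl
      have hker : ∀ p : ↥B × Multiplicative ℤ, φ p = 1 → ψ p = 1 := by
        intro p hp
        rw [hφ] at hp
        set j := Multiplicative.toAdd p.2 with hjdef
        have h1 : (p.1 : A) = (x ^ j)⁻¹ := eq_inv_of_mul_eq_one_left hp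
        have h2 : ((x : A) : A ⧸ B) ^ j = 1 := by
          rw [← QuotientGroup.mk_zpow, QuotientGroup.eq_one_iff]
          rw [show x ^ j = ((p.1 : A))⁻¹ by rw [h1, inv_inv]]
          exact B.inv_mem p.1.2
        obtain ⟨q, hq⟩ : (m : ℤ) ∣ j := orderOf_dvd_iff_zpow_eq_one.mpr h2
        have hp1 : p.1 = (⟨x ^ m, hxm⟩ : ↥B) ^ (-q) := by
          apply Subtype.ext
          rw [SubgroupClass.coe_zpow, h1, hq, zpow_mul, ← zpow_neg, zpow_natCast]
        rw [hψ, hp1, map_zpow, ← hzu, ← zpow_natCast zu m, ← zpow_mul]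
        have harith : ((m : ℤ) * -q + Multiplicative.toAdd p.2 : ℤ) = 0 := by
          rw [← hjdef, hq]; ring
        rw [← zpow_add, harith, zpow_zero]
      set B' : Subgroup A := B ⊔ Subgroup.zpowers x with hB'def
      have hmem : ∀ p : ↥B × Multiplicative ℤ, φ p ∈ B' := by
        intro p
        rw [hφ]
        exact Subgroup.mul_mem _ (Subgroup.mem_sup_left p.1.2)
          (Subgroup.mem_sup_right (Subgroup.zpow_mem _ (Subgroup.mem_zpowers x) _))
      set φ' : ↥B × Multiplicative ℤ →* ↥B' := φ.codRestrict B' hmem with hφ'def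
      have hsurj : Function.Surjective φ' := by
        rintro ⟨b', hb'⟩
        obtain ⟨y, hy, w, hw, hyw⟩ := Subgroup.mem_sup.mp hb'
        obtain ⟨j, hj⟩ := Subgroup.mem_zpowers_iff.mp hw
        refine ⟨(⟨y, hy⟩, Multiplicative.ofAdd j), ?_⟩
        apply Subtype.ext
        show φ _ = b'
        rw [hφ]
        simpa [hj] using hyw
      have hkerle : ∀ p ∈ φ'.ker, p ∈ ψ.ker := by
        intro p hp
        exact MonoidHom.mem_ker.mpr
          (hker p (congrArg Subtype.val (MonoidHom.mem_ker.mp hp)))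
      set e := QuotientGroup.quotientKerEquivOfSurjective φ' hsurj with hedef
      set ψbar : (↥B × Multiplicative ℤ) ⧸ φ'.ker →* ℂˣ :=
        QuotientGroup.lift φ'.ker ψ hkerle with hψbardef
      set f' : ↥B' →* ℂˣ := ψbar.comp e.symm.toMonoidHom with hf'def
      have hf' : ∀ p, f' (φ' p) = ψ p := by
        intro p
        have he : e (QuotientGroup.mk p) = φ' p := rfl
        show ψbar (e.symm (φ' p)) = ψ p
        rw [← he, MulEquiv.symm_apply_apply]
        rfl
      have hlt : B < B' := lt_of_le_of_ne le_sup_left (by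
        intro h
        exact hx (h ▸ Subgroup.mem_sup_right (Subgroup.mem_zpowers x)))
      have hcard := card_lt_of_lt hlt
      obtain ⟨g, hg⟩ := ih B' (by omega) f'
      refine ⟨g, fun b => ?_⟩
      have h0 : φ' (b, 1) = ⟨(b : A), Subgroup.mem_sup_left b.2⟩ := by
        apply Subtype.ext
        show φ _ = (b : A)
        rw [hφ]
        simp
      have := hg (φ' (b, 1))
      rw [hf', hψ] at this
      simp only [h0] at this
      simpa using this

lemma exists_char_extension (B : Subgroup A) (f : ↥B →* ℂˣ) :
    ∃ g : A →* ℂˣ, ∀ b : ↥B, g b = f b :=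
  exists_char_extension_aux (Nat.card A) B (Nat.sub_le _ _) f

end CharExt
section ConjChar

variable {G : Type*} [Group G] (N : Subgroup G) [hN : N.Normal]

/-- The conjugate character `n ↦ χ (g n g⁻¹)`. -/
def conjChar (χ : N →* ℂˣ) (g : G) : N →* ℂˣ where
  toFun n := χ ⟨g * (n : G) * g⁻¹, hN.conj_mem _ n.2 g⟩
  map_one' := by
    show χ ⟨g * ((1 : N) : G) * g⁻¹, _⟩ = 1
    have : (⟨g * ((1 : N) : G) * g⁻¹, hN.conj_mem _ (one_mem N) g⟩ : N) = 1 := by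
      apply Subtype.ext; simp
    rw [this, map_one]
  map_mul' := by
    intro a b
    rw [← map_mul]
    exact congrArg χ (Subtype.ext (by
      show g * ((a : G) * (b : G)) * g⁻¹ = (g * (a : G) * g⁻¹) * (g * (b : G) * g⁻¹)
      group))

lemma conjChar_apply (χ : N →* ℂˣ) (g : G) (n : N) :
    conjChar N χ g n = χ ⟨g * (n : G) * g⁻¹, hN.conj_mem _ n.2 g⟩ := rfl

lemma conjChar_eq_of_coe (χ : N →* ℂˣ) (g : G) (n : N) (x : G) (hx : x ∈ N)
    (h : g * (n : G) * g⁻¹ = x) : conjChar N χ g n = χ ⟨x, hx⟩ := by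
  rw [conjChar_apply]; congr 1; exact Subtype.ext h

lemma conjChar_one (χ : N →* ℂˣ) : conjChar N χ 1 = χ := by
  ext n
  rw [conjChar_eq_of_coe N χ 1 n n n.2 (by group)]

lemma conjChar_mul (χ : N →* ℂˣ) (x y : G) :
    conjChar N χ (x * y) = conjChar N (conjChar N χ x) y := by
  ext n
  rw [conjChar_apply, conjChar_apply, conjChar_apply]
  exact congrArg Units.val (congrArg χ (Subtype.ext (by
    show (x * y) * (n : G) * (x * y)⁻¹ = x * (y * (n : G) * y⁻¹) * x⁻¹
    group)))

lemma conjChar_of_mem (χ : N →* ℂˣ) {n : G} (hn : n ∈ N) : conjChar N χ n = χ := by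
  ext m
  have hmem : n * (m : G) * n⁻¹ ∈ N := mul_mem (mul_mem hn m.2) (inv_mem hn)
  have h1 : conjChar N χ n m = χ ⟨n * (m : G) * n⁻¹, hmem⟩ :=
    conjChar_eq_of_coe N χ n m _ hmem rfl
  have h2 : (⟨n * (m : G) * n⁻¹, hmem⟩ : N) = ⟨n, hn⟩ * m * ⟨n, hn⟩⁻¹ := Subtype.ext rfl
  have h3 : χ ⟨n, hn⟩ * χ m * (χ ⟨n, hn⟩)⁻¹ = χ m := by
    rw [mul_comm (χ ⟨n, hn⟩) (χ m), mul_assoc, mul_inv_cancel, mul_one]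
  rw [h1, h2, map_mul, map_mul, map_inv, h3]

lemma conjChar_nmul (χ : N →* ℂˣ) {n : G} (hn : n ∈ N) (x : G) :
    conjChar N χ (n * x) = conjChar N χ x := by
  rw [conjChar_mul, conjChar_of_mem N χ hn]

lemma conjChar_cancel (χ : N →* ℂˣ) (g : G) :
    conjChar N (conjChar N χ g) g⁻¹ = χ := by
  rw [← conjChar_mul, mul_inv_cancel, conjChar_one]

end ConjChar
section VVSec
set_option linter.unusedSectionVars false

open Classical

variable {G : Type*} [Group G] (N : Subgroup G) [hN : N.Normal] (χ : N →* ℂˣ)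
  (H₀ : Subgroup G)

/-- The carrier of `Ind_N^{N ⊔ H₀} χ`. -/
abbrev VV : Submodule ℂ (↥(N ⊔ H₀) → ℂ) :=
  indCarrier (charRep (χ.comp
    (Subgroup.subgroupOfEquivOfLe (le_sup_left : N ≤ N ⊔ H₀)).toMonoidHom))

lemma VV_spec (f : ↥(N ⊔ H₀) → ℂ) :
    f ∈ VV N χ H₀ ↔
      ∀ (n : G) (hn : n ∈ N) (k : ↥(N ⊔ H₀)),
        f (⟨n, Subgroup.mem_sup_left hn⟩ * k) = (χ ⟨n, hn⟩ : ℂ) * f k := by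
  constructor
  · intro hf n hn k
    have := hf ⟨⟨n, Subgroup.mem_sup_left hn⟩, by simpa [Subgroup.mem_subgroupOf] using hn⟩ k
    simp only [charRep, Units.smul_def, MonoidHom.comp_apply, MonoidHom.coe_comp,
      Function.comp_apply, DistribMulAction.toModuleEnd_apply, DistribSMul.toLinearMap_apply,
      smul_eq_mul] at this
    convert this using 2
    rfl
  · intro hf h k
    have hmem : ((h : ↥(N ⊔ H₀)) : G) ∈ N := Subgroup.mem_subgroupOf.mp h.2
    have h2 := hf ((h : ↥(N ⊔ H₀)) : G) hmem k
    have harg : (⟨((h : ↥(N ⊔ H₀)) : G), Subgroup.mem_sup_left hmem⟩ : ↥(N ⊔ H₀))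
        = (h : ↥(N ⊔ H₀)) := Subtype.ext rfl
    rw [harg] at h2
    rw [h2]
    simp only [charRep, Units.smul_def, MonoidHom.comp_apply, MonoidHom.coe_comp,
      Function.comp_apply, DistribMulAction.toModuleEnd_apply]
    congr 2

lemma VV_eval {f : ↥(N ⊔ H₀) → ℂ} (hf : f ∈ VV N χ H₀) {n : G} (hn : n ∈ N)
    {x : G} (hx : x ∈ N ⊔ H₀) :
    f ⟨n * x, mul_mem (Subgroup.mem_sup_left hn) hx⟩ = (χ ⟨n, hn⟩ : ℂ) * f ⟨x, hx⟩ := by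
  have := (VV_spec N χ H₀ f).mp hf n hn ⟨x, hx⟩
  convert this using 2
  exact Subtype.ext rfl

/-- The vector in the induced representation supported on `N` with value `χ`. -/
def f0 : ↥(N ⊔ H₀) → ℂ := fun k => if h : (k : G) ∈ N then (χ ⟨(k : G), h⟩ : ℂ) else 0

lemma f0_one : f0 N χ H₀ 1 = 1 := by
  have h1 : ((1 : ↥(N ⊔ H₀)) : G) ∈ N := one_mem N
  simp only [f0]
  rw [dif_pos h1]
  have : (⟨((1 : ↥(N ⊔ H₀)) : G), h1⟩ : N) = 1 := Subtype.ext rfl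
  rw [this, map_one, Units.val_one]

lemma f0_mem : f0 N χ H₀ ∈ VV N χ H₀ := by
  rw [VV_spec]
  intro n hn k
  by_cases hk : (k : G) ∈ N
  · have hnk : ((⟨n, Subgroup.mem_sup_left hn⟩ * k : ↥(N ⊔ H₀)) : G) ∈ N := mul_mem hn hk
    simp only [f0]
    rw [dif_pos hnk, dif_pos hk]
    have : (⟨((⟨n, Subgroup.mem_sup_left hn⟩ * k : ↥(N ⊔ H₀)) : G), hnk⟩ : N)
        = ⟨n, hn⟩ * ⟨(k : G), hk⟩ := Subtype.ext rfl
    rw [this, map_mul, Units.val_mul]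
  · have hnk : ¬ ((⟨n, Subgroup.mem_sup_left hn⟩ * k : ↥(N ⊔ H₀)) : G) ∈ N := by
      intro h
      apply hk
      have hh : (k : G) = n⁻¹ * (n * (k : G)) := by group
      rw [hh]
      exact mul_mem (inv_mem hn) h
    simp only [f0]
    rw [dif_neg hnk, dif_neg hk, mul_zero]

lemma f0_ne_zero : (⟨f0 N χ H₀, f0_mem N χ H₀⟩ : ↥(VV N χ H₀)) ≠ 0 := by
  intro h
  have h2 : f0 N χ H₀ 1 = 0 :=
    congrArg (fun v : ↥(VV N χ H₀) => (v : ↥(N ⊔ H₀) → ℂ) 1) h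
  rw [f0_one] at h2
  exact one_ne_zero h2

lemma indToJoin_apply (k₀ : ↥(N ⊔ H₀)) (f : ↥(VV N χ H₀)) (k : ↥(N ⊔ H₀)) :
    ((indToJoin N H₀ χ k₀ f : ↥(VV N χ H₀)) : ↥(N ⊔ H₀) → ℂ) k = (f : ↥(N ⊔ H₀) → ℂ) (k * k₀) :=
  rfl

/-- `ρ(m) f0 = χ(m) • f0` for `m ∈ N`. -/
lemma indToJoin_f0 {m : G} (hm : m ∈ N) :
    indToJoin N H₀ χ ⟨m, Subgroup.mem_sup_left hm⟩ ⟨f0 N χ H₀, f0_mem N χ H₀⟩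
      = (χ ⟨m, hm⟩ : ℂ) • ⟨f0 N χ H₀, f0_mem N χ H₀⟩ := by
  apply Subtype.ext
  funext k
  rw [indToJoin_apply]
  show f0 N χ H₀ (k * ⟨m, Subgroup.mem_sup_left hm⟩)
    = ((χ ⟨m, hm⟩ : ℂ) • (⟨f0 N χ H₀, f0_mem N χ H₀⟩ : ↥(VV N χ H₀)) : ↥(VV N χ H₀)).1 k
  have hrhs : ((χ ⟨m, hm⟩ : ℂ) • (⟨f0 N χ H₀, f0_mem N χ H₀⟩ : ↥(VV N χ H₀)) : ↥(VV N χ H₀)).1 k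
      = (χ ⟨m, hm⟩ : ℂ) * f0 N χ H₀ k := rfl
  rw [hrhs]
  by_cases hk : (k : G) ∈ N
  · have hkm : ((k * ⟨m, Subgroup.mem_sup_left hm⟩ : ↥(N ⊔ H₀)) : G) ∈ N := mul_mem hk hm
    simp only [f0]
    rw [dif_pos hkm, dif_pos hk]
    have : (⟨((k * ⟨m, Subgroup.mem_sup_left hm⟩ : ↥(N ⊔ H₀)) : G), hkm⟩ : N)
        = ⟨(k : G), hk⟩ * ⟨m, hm⟩ := Subtype.ext rfl
    rw [this, map_mul, Units.val_mul, mul_comm]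
  · have hkm : ¬ ((k * ⟨m, Subgroup.mem_sup_left hm⟩ : ↥(N ⊔ H₀)) : G) ∈ N := by
      intro h
      apply hk
      have hh : (k : G) = ((k : G) * m) * m⁻¹ := by group
      rw [hh]
      exact mul_mem h (inv_mem hm)
    simp only [f0]
    rw [dif_neg hkm, dif_neg hk, mul_zero]

end VVSec
section Schur
set_option linter.unusedSectionVars false
open Classical

variable {G : Type*} [Group G] [Finite G] (N : Subgroup G) [hN : N.Normal] (χ : N →* ℂˣ)
  (H₀ : Subgroup G)

/-- Left-translation operator by `u ∈ H₀` when `χᵘ = χ`. -/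
def Tleft (u : G) (hu : u ∈ H₀) (huχ : conjChar N χ u = χ) :
    ↥(VV N χ H₀) →ₗ[ℂ] ↥(VV N χ H₀) where
  toFun f := ⟨fun k => (f : ↥(N ⊔ H₀) → ℂ) (⟨u, Subgroup.mem_sup_right hu⟩ * k), by
    rw [VV_spec]
    intro n hn k
    have hmem : u * n * u⁻¹ ∈ N := hN.conj_mem _ hn u
    have harg : (⟨u, Subgroup.mem_sup_right hu⟩ * (⟨n, Subgroup.mem_sup_left hn⟩ * k)
          : ↥(N ⊔ H₀))
        = ⟨u * n * u⁻¹, Subgroup.mem_sup_left hmem⟩ * (⟨u, Subgroup.mem_sup_right hu⟩ * k) := by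
      apply Subtype.ext
      show u * (n * (k : G)) = (u * n * u⁻¹) * (u * (k : G))
      group
    rw [harg, (VV_spec N χ H₀ _).mp f.2 _ hmem]
    have hχ : χ ⟨u * n * u⁻¹, hmem⟩ = χ ⟨n, hn⟩ := by
      rw [← conjChar_eq_of_coe N χ u ⟨n, hn⟩ _ hmem rfl, huχ]
    rw [hχ]⟩
  map_add' f g := rfl
  map_smul' c f := by apply Subtype.ext; funext k; rfl

lemma mem_N_of_fixed (hIrr : IsIrreducibleRep (indToJoin N H₀ χ)) {u : G} (hu : u ∈ H₀)
    (huχ : conjChar N χ u = χ) : u ∈ N := by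
  by_contra hun
  set T := Tleft N χ H₀ u hu huχ with hTdef
  haveI : Nontrivial ↥(VV N χ H₀) := hIrr.1
  obtain ⟨c, hc⟩ := Module.End.exists_eigenvalue T
  set U := Module.End.eigenspace T c with hUdef
  have hinv : ∀ (g : ↥(N ⊔ H₀)) (v : ↥(VV N χ H₀)), v ∈ U → indToJoin N H₀ χ g v ∈ U := by
    intro g v hv
    rw [Module.End.mem_eigenspace_iff] at hv ⊢
    have hcomm : T (indToJoin N H₀ χ g v) = indToJoin N H₀ χ g (T v) :=
      Subtype.ext (funext fun k => congrArg (v : ↥(N ⊔ H₀) → ℂ) (mul_assoc _ _ _))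
    rw [hcomm, hv, map_smul]
  rcases hIrr.2 U hinv with hbot | htop
  · exact hc hbot
  · have hall : ∀ v : ↥(VV N χ H₀), T v = c • v := by
      intro v
      have hv : v ∈ U := by rw [htop]; exact Submodule.mem_top
      exact Module.End.mem_eigenspace_iff.mp hv
    set fv : ↥(VV N χ H₀) := ⟨f0 N χ H₀, f0_mem N χ H₀⟩ with hfvdef
    have h1 := congrArg (fun w : ↥(VV N χ H₀) => (w : ↥(N ⊔ H₀) → ℂ) 1) (hall fv)
    have hL1 : (T fv : ↥(N ⊔ H₀) → ℂ) 1 = 0 := by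
      show f0 N χ H₀ (⟨u, Subgroup.mem_sup_right hu⟩ * 1) = 0
      rw [mul_one]
      simp only [f0]
      rw [dif_neg hun]
    have hR1 : ((c • fv : ↥(VV N χ H₀)) : ↥(N ⊔ H₀) → ℂ) 1 = c := by
      show c * f0 N χ H₀ 1 = c
      rw [f0_one, mul_one]
    rw [hL1, hR1] at h1
    have h2 := congrArg
      (fun w : ↥(VV N χ H₀) => (w : ↥(N ⊔ H₀) → ℂ) (⟨u, Subgroup.mem_sup_right hu⟩⁻¹)) (hall fv)
    have hL2 : (T fv : ↥(N ⊔ H₀) → ℂ) (⟨u, Subgroup.mem_sup_right hu⟩⁻¹) = 1 := by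
      show f0 N χ H₀ (⟨u, Subgroup.mem_sup_right hu⟩ * ⟨u, Subgroup.mem_sup_right hu⟩⁻¹) = 1
      rw [mul_inv_cancel, f0_one]
    rw [hL2, ← h1] at h2
    simp at h2

end Schur
section ExistsT
set_option linter.unusedSectionVars false
open Classical

variable {G : Type*} [Group G] [Finite G] (N : Subgroup G) [hN : N.Normal] (χ : N →* ℂˣ)
  (H₀ : Subgroup G) (hKnorm : (N ⊔ H₀).Normal)

lemma exists_t
    (hstab : ∀ g : G,
      RepIso ((indToJoin N H₀ χ).comp
          (conjHom (N ⊔ H₀) g (fun k hk => hKnorm.conj_mem k hk g)))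
        (indToJoin N H₀ χ))
    (g : G) : ∃ t, t ∈ H₀ ∧ conjChar N χ g = conjChar N χ t := by
  obtain ⟨e, he⟩ := hstab g
  have hw0 : e ⟨f0 N χ H₀, f0_mem N χ H₀⟩ ≠ 0 := fun h =>
    f0_ne_zero N χ H₀ (e.map_eq_zero_iff.mp h)
  have hwchar : ∀ (n : G) (hn : n ∈ N),
      indToJoin N H₀ χ ⟨n, Subgroup.mem_sup_left hn⟩ (e ⟨f0 N χ H₀, f0_mem N χ H₀⟩)
        = (conjChar N χ g ⟨n, hn⟩ : ℂ) • (e ⟨f0 N χ H₀, f0_mem N χ H₀⟩) := by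
    intro n hn
    have h1 := he ⟨n, Subgroup.mem_sup_left hn⟩ ⟨f0 N χ H₀, f0_mem N χ H₀⟩
    have hmem : g * n * g⁻¹ ∈ N := hN.conj_mem _ hn g
    have hc : (conjHom (N ⊔ H₀) g (fun k hk => hKnorm.conj_mem k hk g))
          ⟨n, Subgroup.mem_sup_left hn⟩
        = ⟨g * n * g⁻¹, Subgroup.mem_sup_left hmem⟩ := Subtype.ext rfl
    rw [MonoidHom.comp_apply, hc, indToJoin_f0 N χ H₀ hmem, map_smul] at h1
    rw [conjChar_eq_of_coe N χ g ⟨n, hn⟩ _ hmem rfl]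
    exact h1.symm
  obtain ⟨k₀, hk₀⟩ : ∃ k₀ : ↥(N ⊔ H₀),
      ((e ⟨f0 N χ H₀, f0_mem N χ H₀⟩ : ↥(VV N χ H₀)) : ↥(N ⊔ H₀) → ℂ) k₀ ≠ 0 := by
    by_contra h
    push_neg at h
    exact hw0 (Subtype.ext (funext fun k => h k))
  have hchar : ∀ n : N, conjChar N χ g n = conjChar N χ (k₀ : G) n := by
    intro n
    have h2 := congrArg (fun v : ↥(VV N χ H₀) => (v : ↥(N ⊔ H₀) → ℂ) k₀)
      (hwchar (n : G) n.2)
    have hmm : (k₀ : G) * n * (k₀ : G)⁻¹ ∈ N := hN.conj_mem _ n.2 k₀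
    have hL : ((indToJoin N H₀ χ ⟨(n : G), Subgroup.mem_sup_left n.2⟩
            (e ⟨f0 N χ H₀, f0_mem N χ H₀⟩) : ↥(VV N χ H₀)) : ↥(N ⊔ H₀) → ℂ) k₀
        = ((e ⟨f0 N χ H₀, f0_mem N χ H₀⟩ : ↥(VV N χ H₀)) : ↥(N ⊔ H₀) → ℂ)
            ⟨((k₀ : G) * n * (k₀ : G)⁻¹) * (k₀ : G),
              mul_mem (Subgroup.mem_sup_left hmm) k₀.2⟩ := by
      rw [indToJoin_apply]
      exact congrArg _ (Subtype.ext (by push_cast; group))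
    rw [hL, VV_eval N χ H₀ (e ⟨f0 N χ H₀, f0_mem N χ H₀⟩).2 hmm k₀.2] at h2
    have hk₀eta : (⟨(k₀ : G), k₀.2⟩ : ↥(N ⊔ H₀)) = k₀ := Subtype.ext rfl
    rw [hk₀eta] at h2
    have hR : ((((conjChar N χ g ⟨(n : G), n.2⟩ : ℂˣ) : ℂ)
          • (e ⟨f0 N χ H₀, f0_mem N χ H₀⟩) : ↥(VV N χ H₀)) : ↥(N ⊔ H₀) → ℂ) k₀
        = (conjChar N χ g ⟨(n : G), n.2⟩ : ℂ)
          * ((e ⟨f0 N χ H₀, f0_mem N χ H₀⟩ : ↥(VV N χ H₀)) : ↥(N ⊔ H₀) → ℂ) k₀ := rfl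
    rw [hR] at h2
    have := mul_right_cancel₀ hk₀ h2
    have heta : (⟨(n : G), n.2⟩ : N) = n := Subtype.ext rfl
    rw [heta] at this
    rw [conjChar_eq_of_coe N χ (k₀ : G) n _ hmm rfl]
    exact Units.ext (by
      rw [← this])
  obtain ⟨n₀, hn₀, t₀, ht₀, hprod⟩ : ∃ n₀ ∈ (N : Set G), ∃ t₀ ∈ (H₀ : Set G),
      n₀ * t₀ = (k₀ : G) := by
    have : (k₀ : G) ∈ (↑(N ⊔ H₀) : Set G) := k₀.2
    rw [Subgroup.normal_mul] at this
    exact this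
  refine ⟨t₀, ht₀, ?_⟩
  have h3 : conjChar N χ (k₀ : G) = conjChar N χ t₀ := by
    rw [← hprod, conjChar_nmul N χ hn₀]
  exact MonoidHom.ext fun n => (hchar n).trans (DFunLike.congr_fun h3 n)

end ExistsT
section EgrpSec
set_option linter.unusedSectionVars false

variable {G : Type*} [Group G] (N H : Subgroup G) [hN : N.Normal]
  (hHab : ∀ a b : G, a ∈ H → b ∈ H → a * b = b * a)
  (H₀ : Subgroup G) (hH₀ : H₀ ≤ H) (χ : N →* ℂˣ)

/-- The abelian group `E = {(a,b) ∈ H × H₀ : χᵃ = χᵇ}`. -/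
def Egrp : Subgroup (G × G) where
  carrier := {p | p.1 ∈ H ∧ p.2 ∈ H₀ ∧ conjChar N χ p.1 = conjChar N χ p.2}
  one_mem' := ⟨one_mem H, one_mem H₀, rfl⟩
  mul_mem' := by
    rintro ⟨a₁, b₁⟩ ⟨a₂, b₂⟩ ⟨ha₁, hb₁, h₁⟩ ⟨ha₂, hb₂, h₂⟩
    refine ⟨mul_mem ha₁ ha₂, mul_mem hb₁ hb₂, ?_⟩
    have hc1 : b₁ * a₂ = a₂ * b₁ := hHab b₁ a₂ (hH₀ hb₁) ha₂
    have hc2 : b₂ * b₁ = b₁ * b₂ := hHab b₂ b₁ (hH₀ hb₂) (hH₀ hb₁)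
    calc conjChar N χ (a₁ * a₂) = conjChar N (conjChar N χ a₁) a₂ := conjChar_mul N χ a₁ a₂
      _ = conjChar N (conjChar N χ b₁) a₂ := by rw [h₁]
      _ = conjChar N χ (b₁ * a₂) := (conjChar_mul N χ b₁ a₂).symm
      _ = conjChar N χ (a₂ * b₁) := by rw [hc1]
      _ = conjChar N (conjChar N χ a₂) b₁ := conjChar_mul N χ a₂ b₁
      _ = conjChar N (conjChar N χ b₂) b₁ := by rw [h₂]
      _ = conjChar N χ (b₂ * b₁) := (conjChar_mul N χ b₂ b₁).symm
      _ = conjChar N χ (b₁ * b₂) := by rw [hc2]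
  inv_mem' := by
    rintro ⟨a, b⟩ ⟨ha, hb, h⟩
    refine ⟨inv_mem ha, inv_mem hb, ?_⟩
    have h1 : conjChar N χ (b * a⁻¹) = χ := by
      calc conjChar N χ (b * a⁻¹) = conjChar N (conjChar N χ b) a⁻¹ := conjChar_mul N χ b a⁻¹
        _ = conjChar N (conjChar N χ a) a⁻¹ := by rw [h]
        _ = conjChar N χ (a * a⁻¹) := (conjChar_mul N χ a a⁻¹).symm
        _ = χ := by rw [mul_inv_cancel, conjChar_one]
    have h2 : b * a⁻¹ = a⁻¹ * b := hHab b a⁻¹ (hH₀ hb) (inv_mem ha)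
    have h3 : conjChar N χ (a⁻¹ * b) = χ := by rw [← h2, h1]
    calc conjChar N χ a⁻¹ = conjChar N χ ((a⁻¹ * b) * b⁻¹) := by
          congr 1; group
      _ = conjChar N (conjChar N χ (a⁻¹ * b)) b⁻¹ := conjChar_mul N χ _ _
      _ = conjChar N χ b⁻¹ := by rw [h3]

lemma Egrp_comm :
    ∀ p q : ↥(Egrp N H hHab H₀ hH₀ χ), p * q = q * p := by
  rintro ⟨⟨a₁, b₁⟩, ha₁, hb₁, h₁⟩ ⟨⟨a₂, b₂⟩, ha₂, hb₂, h₂⟩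
  apply Subtype.ext
  apply Prod.ext
  · exact hHab a₁ a₂ ha₁ ha₂
  · exact hHab b₁ b₂ (hH₀ hb₁) (hH₀ hb₂)

/-- The commutative group structure on `E`. -/
abbrev EgrpComm : CommGroup ↥(Egrp N H hHab H₀ hH₀ χ) :=
  { (inferInstance : Group ↥(Egrp N H hHab H₀ hH₀ χ)) with
    mul_comm := Egrp_comm N H hHab H₀ hH₀ χ }

/-- The subgroup `F = {(a,b) ∈ E : a b⁻¹ ∈ N}` of `E`. -/
def Fsub : Subgroup ↥(Egrp N H hHab H₀ hH₀ χ) where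
  carrier := {p | (p : G × G).1 * (p : G × G).2⁻¹ ∈ N}
  one_mem' := by
    show (1 : G) * (1 : G)⁻¹ ∈ N
    simpa using one_mem N
  mul_mem' := by
    rintro ⟨⟨a₁, b₁⟩, hp⟩ ⟨⟨a₂, b₂⟩, hq⟩ h₁ h₂
    show (a₁ * a₂) * (b₁ * b₂)⁻¹ ∈ N
    have h₁' : a₁ * b₁⁻¹ ∈ N := h₁
    have h₂' : a₂ * b₂⁻¹ ∈ N := h₂
    have key : (a₁ * a₂) * (b₁ * b₂)⁻¹ = (a₁ * b₁⁻¹) * (b₁ * (a₂ * b₂⁻¹) * b₁⁻¹) := by group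
    rw [key]
    exact mul_mem h₁' (hN.conj_mem _ h₂' b₁)
  inv_mem' := by
    rintro ⟨⟨a, b⟩, hp⟩ h
    show a⁻¹ * (b⁻¹)⁻¹ ∈ N
    have h' : a * b⁻¹ ∈ N := h
    have key : a⁻¹ * (b⁻¹)⁻¹ = a⁻¹ * (a * b⁻¹)⁻¹ * a := by group
    rw [key]
    have := hN.conj_mem _ (inv_mem h') a⁻¹
    rwa [show a⁻¹ * (a * b⁻¹)⁻¹ * a⁻¹⁻¹ = a⁻¹ * (a * b⁻¹)⁻¹ * a by group] at this

lemma Fsub_mem_N {p : ↥(Egrp N H hHab H₀ hH₀ χ)} (hp : p ∈ Fsub N H hHab H₀ hH₀ χ) :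
    (p : G × G).1 * (p : G × G).2⁻¹ ∈ N := hp

/-- The character `ν₀` on `F`: `(a,b) ↦ χ(a b⁻¹)⁻¹`. -/
def nu0 : ↥(Fsub N H hHab H₀ hH₀ χ) →* ℂˣ where
  toFun p := (χ ⟨((p : ↥(Egrp N H hHab H₀ hH₀ χ)) : G × G).1
    * ((p : ↥(Egrp N H hHab H₀ hH₀ χ)) : G × G).2⁻¹, p.2⟩)⁻¹
  map_one' := by
    have h1 : (⟨(1 : G) * (1 : G)⁻¹, (Fsub N H hHab H₀ hH₀ χ).one_mem⟩ : N) = 1 := by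
      apply Subtype.ext; simp
    show (χ ⟨(1 : G) * (1 : G)⁻¹, _⟩)⁻¹ = 1
    have h2 : ∀ p, (χ ⟨(1 : G) * (1 : G)⁻¹, p⟩)⁻¹ = 1 := fun p => by
      rw [show (⟨(1 : G) * (1 : G)⁻¹, p⟩ : N) = 1 from Subtype.ext (by simp), map_one, inv_one]
    exact h2 _
  map_mul' := by
    rintro ⟨⟨⟨a₁, b₁⟩, hE₁⟩, h₁⟩ ⟨⟨⟨a₂, b₂⟩, hE₂⟩, h₂⟩
    show (χ ⟨(a₁ * a₂) * (b₁ * b₂)⁻¹, _⟩)⁻¹ = (χ ⟨a₁ * b₁⁻¹, h₁⟩)⁻¹ * (χ ⟨a₂ * b₂⁻¹, h₂⟩)⁻¹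
    rw [← mul_inv]
    congr 1
    rw [← map_mul]
    congr 1
    apply Subtype.ext
    show (a₁ * a₂) * (b₁ * b₂)⁻¹ = (a₁ * b₁⁻¹) * (a₂ * b₂⁻¹)
    have hc1 : b₁⁻¹ * a₂ = a₂ * b₁⁻¹ := hHab b₁⁻¹ a₂ (inv_mem (hH₀ hE₁.2.1)) hE₂.1
    have hc2 : b₁⁻¹ * b₂⁻¹ = b₂⁻¹ * b₁⁻¹ := hHab b₁⁻¹ b₂⁻¹ (inv_mem (hH₀ hE₁.2.1))
      (inv_mem (hH₀ hE₂.2.1))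
    calc (a₁ * a₂) * (b₁ * b₂)⁻¹ = a₁ * (a₂ * (b₂⁻¹ * b₁⁻¹)) := by group
      _ = a₁ * (a₂ * (b₁⁻¹ * b₂⁻¹)) := by rw [hc2]
      _ = a₁ * ((a₂ * b₁⁻¹) * b₂⁻¹) := by group
      _ = a₁ * ((b₁⁻¹ * a₂) * b₂⁻¹) := by rw [hc1]
      _ = (a₁ * b₁⁻¹) * (a₂ * b₂⁻¹) := by group

end EgrpSec
section OpSec
set_option linter.unusedSectionVars false
open Classical

variable {G : Type*} [Group G] [Finite G] {N H : Subgroup G} [hN : N.Normal]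
  {hHab : ∀ a b : G, a ∈ H → b ∈ H → a * b = b * a}
  {H₀ : Subgroup G} {hH₀ : H₀ ≤ H} {χ : N →* ℂˣ}

lemma mem_Egrp_iff (p : G × G) :
    p ∈ Egrp N H hHab H₀ hH₀ χ ↔
      (p.1 ∈ H ∧ p.2 ∈ H₀ ∧ conjChar N χ p.1 = conjChar N χ p.2) := Iff.rfl

lemma mem_Fsub_iff (p : ↥(Egrp N H hHab H₀ hH₀ χ)) :
    p ∈ Fsub N H hHab H₀ hH₀ χ ↔ (p : G × G).1 * (p : G × G).2⁻¹ ∈ N := Iff.rfl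

lemma conjChar_ba_inv {a b : G} (hab : (a, b) ∈ Egrp N H hHab H₀ hH₀ χ) :
    conjChar N χ (b * a⁻¹) = χ := by
  have h := ((mem_Egrp_iff (a, b)).mp hab).2.2
  calc conjChar N χ (b * a⁻¹) = conjChar N (conjChar N χ b) a⁻¹ := conjChar_mul N χ b a⁻¹
    _ = conjChar N (conjChar N χ a) a⁻¹ := by rw [h]
    _ = conjChar N χ (a * a⁻¹) := (conjChar_mul N χ a a⁻¹).symm
    _ = χ := by rw [mul_inv_cancel, conjChar_one]

lemma arg_mem (hKnorm : (N ⊔ H₀).Normal) (g a b : G) (hb : b ∈ H₀) (hNa : g * a⁻¹ ∈ N)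
    (k : ↥(N ⊔ H₀)) : b * a⁻¹ * (k : G) * g ∈ N ⊔ H₀ := by
  have h1 : (k : G) * (g * a⁻¹) ∈ N ⊔ H₀ := mul_mem k.2 (Subgroup.mem_sup_left hNa)
  have h2 := hKnorm.conj_mem _ h1 a⁻¹
  have key : b * a⁻¹ * (k : G) * g = b * (a⁻¹ * ((k : G) * (g * a⁻¹)) * a⁻¹⁻¹) := by group
  rw [key]
  exact mul_mem (Subgroup.mem_sup_right hb) h2

lemma op_mem (hKnorm : (N ⊔ H₀).Normal) (c : ℂ) (g a b : G)
    (hab : (a, b) ∈ Egrp N H hHab H₀ hH₀ χ) (hNa : g * a⁻¹ ∈ N)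
    (f : ↥(N ⊔ H₀) → ℂ) (hf : f ∈ VV N χ H₀) :
    (fun k : ↥(N ⊔ H₀) => c * f ⟨b * a⁻¹ * (k : G) * g,
      arg_mem hKnorm g a b ((mem_Egrp_iff (a, b)).mp hab).2.1 hNa k⟩) ∈ VV N χ H₀ := by
  rw [VV_spec]
  intro n hn k
  have hx : (b * a⁻¹) * n * (b * a⁻¹)⁻¹ ∈ N := hN.conj_mem _ hn (b * a⁻¹)
  have harg : (⟨b * a⁻¹ * ((⟨n, Subgroup.mem_sup_left hn⟩ * k : ↥(N ⊔ H₀)) : G) * g,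
        arg_mem hKnorm g a b ((mem_Egrp_iff (a, b)).mp hab).2.1 hNa
          (⟨n, Subgroup.mem_sup_left hn⟩ * k)⟩
        : ↥(N ⊔ H₀))
      = ⟨((b * a⁻¹) * n * (b * a⁻¹)⁻¹) * (b * a⁻¹ * (k : G) * g),
          mul_mem (Subgroup.mem_sup_left hx)
            (arg_mem hKnorm g a b ((mem_Egrp_iff (a, b)).mp hab).2.1 hNa k)⟩ := by
    apply Subtype.ext
    push_cast
    group
  rw [harg, VV_eval N χ H₀ hf hx
    (arg_mem hKnorm g a b ((mem_Egrp_iff (a, b)).mp hab).2.1 hNa k)]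
  have hχ : χ ⟨(b * a⁻¹) * n * (b * a⁻¹)⁻¹, hx⟩ = χ ⟨n, hn⟩ := by
    rw [← conjChar_eq_of_coe N χ (b * a⁻¹) ⟨n, hn⟩ _ hx rfl, conjChar_ba_inv hab]
  rw [hχ]
  ring

/-- The candidate operator for `g` attached to a valid pair `(a, b)`. -/
def extOp (hKnorm : (N ⊔ H₀).Normal) (ν : ↥(Egrp N H hHab H₀ hH₀ χ) →* ℂˣ) (g a b : G)
    (hab : (a, b) ∈ Egrp N H hHab H₀ hH₀ χ) (hNa : g * a⁻¹ ∈ N) :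
    ↥(VV N χ H₀) →ₗ[ℂ] ↥(VV N χ H₀) where
  toFun f := ⟨fun k => ((ν ⟨(a, b), hab⟩ : ℂˣ) : ℂ)⁻¹ * (f : ↥(N ⊔ H₀) → ℂ)
      ⟨b * a⁻¹ * (k : G) * g,
        arg_mem hKnorm g a b ((mem_Egrp_iff (a, b)).mp hab).2.1 hNa k⟩,
    op_mem hKnorm _ g a b hab hNa _ f.2⟩
  map_add' f₁ f₂ := by
    apply Subtype.ext
    funext k
    show ((ν ⟨(a, b), hab⟩ : ℂˣ) : ℂ)⁻¹ * ((f₁ : ↥(N ⊔ H₀) → ℂ) _ + (f₂ : ↥(N ⊔ H₀) → ℂ) _)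
      = _ + _
    ring
  map_smul' c f := by
    apply Subtype.ext
    funext k
    show ((ν ⟨(a, b), hab⟩ : ℂˣ) : ℂ)⁻¹ * (c * (f : ↥(N ⊔ H₀) → ℂ) _)
      = c * (((ν ⟨(a, b), hab⟩ : ℂˣ) : ℂ)⁻¹ * (f : ↥(N ⊔ H₀) → ℂ) _)
    ring

lemma extOp_apply (hKnorm : (N ⊔ H₀).Normal) (ν : ↥(Egrp N H hHab H₀ hH₀ χ) →* ℂˣ) (g a b : G)
    (hab : (a, b) ∈ Egrp N H hHab H₀ hH₀ χ) (hNa : g * a⁻¹ ∈ N) (f : ↥(VV N χ H₀))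
    (k : ↥(N ⊔ H₀)) :
    ((extOp hKnorm ν g a b hab hNa f : ↥(VV N χ H₀)) : ↥(N ⊔ H₀) → ℂ) k
      = ((ν ⟨(a, b), hab⟩ : ℂˣ) : ℂ)⁻¹ * (f : ↥(N ⊔ H₀) → ℂ)
          ⟨b * a⁻¹ * (k : G) * g,
            arg_mem hKnorm g a b ((mem_Egrp_iff (a, b)).mp hab).2.1 hNa k⟩ := rfl

/-- Independence of the choice of valid pair. -/
lemma extOp_indep (hKnorm : (N ⊔ H₀).Normal) (ν : ↥(Egrp N H hHab H₀ hH₀ χ) →* ℂˣ)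
    (hν : ∀ q : ↥(Fsub N H hHab H₀ hH₀ χ), ν (q : ↥(Egrp N H hHab H₀ hH₀ χ))
      = nu0 N H hHab H₀ hH₀ χ q)
    (hIrr : IsIrreducibleRep (indToJoin N H₀ χ))
    (g a b a' b' : G) (hab : (a, b) ∈ Egrp N H hHab H₀ hH₀ χ)
    (hab' : (a', b') ∈ Egrp N H hHab H₀ hH₀ χ)
    (hNa : g * a⁻¹ ∈ N) (hNa' : g * a'⁻¹ ∈ N) :
    extOp hKnorm ν g a' b' hab' hNa' = extOp hKnorm ν g a b hab hNa := by
  obtain ⟨ha, hb, habχ⟩ := (mem_Egrp_iff (a, b)).mp hab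
  obtain ⟨ha', hb', habχ'⟩ := (mem_Egrp_iff (a', b')).mp hab'
  have hmH : a' * a⁻¹ ∈ H := mul_mem ha' (inv_mem ha)
  have hmN : a' * a⁻¹ ∈ N := by
    rw [show a' * a⁻¹ = (g * a'⁻¹)⁻¹ * (g * a⁻¹) by group]
    exact mul_mem (inv_mem hNa') hNa
  have huH₀ : b' * b⁻¹ ∈ H₀ := mul_mem hb' (inv_mem hb)
  have hconja : conjChar N χ a' = conjChar N χ a := by
    rw [show a' = (a' * a⁻¹) * a by group, conjChar_nmul N χ hmN]
  have hconjb : conjChar N χ b' = conjChar N χ b := by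
    rw [← habχ', hconja, habχ]
  have huχ : conjChar N χ (b' * b⁻¹) = χ := by
    calc conjChar N χ (b' * b⁻¹) = conjChar N (conjChar N χ b') b⁻¹ := conjChar_mul N χ b' b⁻¹
      _ = conjChar N (conjChar N χ b) b⁻¹ := by rw [hconjb]
      _ = conjChar N χ (b * b⁻¹) := (conjChar_mul N χ b b⁻¹).symm
      _ = χ := by rw [mul_inv_cancel, conjChar_one]
  have huN : b' * b⁻¹ ∈ N := mem_N_of_fixed N χ H₀ hIrr huH₀ huχ
  have hmuE : ((a' * a⁻¹, b' * b⁻¹) : G × G) ∈ Egrp N H hHab H₀ hH₀ χ := by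
    rw [mem_Egrp_iff]
    exact ⟨hmH, huH₀, by rw [conjChar_of_mem N χ hmN, conjChar_of_mem N χ huN]⟩
  have hmuF : (⟨(a' * a⁻¹, b' * b⁻¹), hmuE⟩ : ↥(Egrp N H hHab H₀ hH₀ χ))
      ∈ Fsub N H hHab H₀ hH₀ χ := by
    rw [mem_Fsub_iff]
    exact mul_mem hmN (inv_mem huN)
  have hsplit : (⟨(a', b'), hab'⟩ : ↥(Egrp N H hHab H₀ hH₀ χ))
      = ⟨(a' * a⁻¹, b' * b⁻¹), hmuE⟩ * ⟨(a, b), hab⟩ := by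
    apply Subtype.ext
    apply Prod.ext <;> (show _ = _ * _) <;> group
  have hν' : ν ⟨(a', b'), hab'⟩
      = (χ ⟨(a' * a⁻¹) * (b' * b⁻¹)⁻¹, hmuF⟩)⁻¹ * ν ⟨(a, b), hab⟩ := by
    rw [hsplit, map_mul]
    congr 1
    exact hν ⟨⟨(a' * a⁻¹, b' * b⁻¹), hmuE⟩, hmuF⟩
  apply LinearMap.ext
  intro f
  apply Subtype.ext
  funext k
  rw [extOp_apply, extOp_apply]
  have hargN : (b' * b⁻¹) * (a' * a⁻¹)⁻¹ ∈ N := mul_mem huN (inv_mem hmN)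
  have hcomm : (b * a⁻¹) * (a' * a⁻¹)⁻¹ = (a' * a⁻¹)⁻¹ * (b * a⁻¹) :=
    hHab _ _ (mul_mem (hH₀ hb) (inv_mem ha)) (inv_mem hmH)
  have harg : (⟨b' * a'⁻¹ * (k : G) * g, arg_mem hKnorm g a' b'
        ((mem_Egrp_iff (a', b')).mp hab').2.1 hNa' k⟩ : ↥(N ⊔ H₀))
      = ⟨((b' * b⁻¹) * (a' * a⁻¹)⁻¹) * (b * a⁻¹ * (k : G) * g),
          mul_mem (Subgroup.mem_sup_left hargN)
            (arg_mem hKnorm g a b ((mem_Egrp_iff (a, b)).mp hab).2.1 hNa k)⟩ := by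
    apply Subtype.ext
    show b' * a'⁻¹ * (k : G) * g = ((b' * b⁻¹) * (a' * a⁻¹)⁻¹) * (b * a⁻¹ * (k : G) * g)
    calc b' * a'⁻¹ * (k : G) * g
        = (b' * b⁻¹) * ((b * a⁻¹) * (a' * a⁻¹)⁻¹) * ((k : G) * g) := by group
      _ = (b' * b⁻¹) * ((a' * a⁻¹)⁻¹ * (b * a⁻¹)) * ((k : G) * g) := by rw [hcomm]
      _ = ((b' * b⁻¹) * (a' * a⁻¹)⁻¹) * (b * a⁻¹ * (k : G) * g) := by group
  rw [harg, VV_eval N χ H₀ f.2 hargN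
    (arg_mem hKnorm g a b ((mem_Egrp_iff (a, b)).mp hab).2.1 hNa k), hν']
  have hprod : ((χ ⟨(a' * a⁻¹) * (b' * b⁻¹)⁻¹, hmuF⟩ : ℂˣ) : ℂ)
      * ((χ ⟨(b' * b⁻¹) * (a' * a⁻¹)⁻¹, hargN⟩ : ℂˣ) : ℂ) = 1 := by
    rw [← Units.val_mul, ← map_mul]
    have h1 : (⟨(a' * a⁻¹) * (b' * b⁻¹)⁻¹, hmuF⟩ : N) * ⟨(b' * b⁻¹) * (a' * a⁻¹)⁻¹, hargN⟩
        = 1 := by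
      apply Subtype.ext
      show ((a' * a⁻¹) * (b' * b⁻¹)⁻¹) * ((b' * b⁻¹) * (a' * a⁻¹)⁻¹) = 1
      group
    rw [h1, map_one, Units.val_one]
  set cX : ℂ := ((χ ⟨(a' * a⁻¹) * (b' * b⁻¹)⁻¹, hmuF⟩ : ℂˣ) : ℂ) with hcX
  set cY : ℂ := ((χ ⟨(b' * b⁻¹) * (a' * a⁻¹)⁻¹, hargN⟩ : ℂˣ) : ℂ) with hcY
  set cν : ℂ := ((ν ⟨(a, b), hab⟩ : ℂˣ) : ℂ) with hcν
  have hXne : cX ≠ 0 := Units.ne_zero _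
  have hνne : cν ≠ 0 := Units.ne_zero _
  show ((((χ ⟨(a' * a⁻¹) * (b' * b⁻¹)⁻¹, hmuF⟩)⁻¹ * ν ⟨(a, b), hab⟩ : ℂˣ)) : ℂ)⁻¹
      * (cY * _) = cν⁻¹ * _
  rw [Units.val_mul]
  have hcoe : (((χ ⟨(a' * a⁻¹) * (b' * b⁻¹)⁻¹, hmuF⟩)⁻¹ : ℂˣ) : ℂ) = cX⁻¹ := by
    rw [hcX]
    exact Units.val_inv_eq_inv_val _
  rw [hcoe]
  have hY : cY = cX⁻¹ := by
    field_simp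
    rw [mul_comm]
    exact hprod
  rw [hY]
  field_simp
  rw [← hcν]
  ring

end OpSec
set_option maxHeartbeats 2000000 in
/-- Let `G` be a finite group, `N ⊴ G`, `H ≤ G` abelian with `G = NH`, `H₀ ≤ H`
and `χ : N → ℂˣ` a one-dimensional representation such that `Ind_N^{NH₀}(χ)` is irreducible and
stabilized by `G`. Then `Ind_N^{NH₀}(χ)` extends to a representation of `G`. -/
theorem statement18 (G : Type*) [Group G] [Finite G]
    (N H : Subgroup G) [N.Normal]
    (hHab : ∀ a b : G, a ∈ H → b ∈ H → a * b = b * a)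
    (hG : N ⊔ H = ⊤)
    (H₀ : Subgroup G) (hH₀ : H₀ ≤ H)
    (χ : N →* ℂˣ)
    (hKnorm : (N ⊔ H₀).Normal)
    (hIrr : IsIrreducibleRep (indToJoin N H₀ χ))
    (hstab : ∀ g : G,
      RepIso ((indToJoin N H₀ χ).comp
          (conjHom (N ⊔ H₀) g (fun k hk => hKnorm.conj_mem k hk g)))
        (indToJoin N H₀ χ)) :
    ∃ τ : Representation ℂ G
      (indCarrier (charRep (χ.comp
        (Subgroup.subgroupOfEquivOfLe (le_sup_left : N ≤ N ⊔ H₀)).toMonoidHom))),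
      ∀ k : ↥(N ⊔ H₀), τ (k : G) = indToJoin N H₀ χ k := by
  classical
  letI : CommGroup ↥(Egrp N H hHab H₀ hH₀ χ) := EgrpComm N H hHab H₀ hH₀ χ
  obtain ⟨ν, hν⟩ := exists_char_extension (Fsub N H hHab H₀ hH₀ χ) (nu0 N H hHab H₀ hH₀ χ)
  have hdecomp : ∀ g : G, ∃ h, h ∈ H ∧ g * h⁻¹ ∈ N := by
    intro g
    have hg : ∃ n ∈ (N : Set G), ∃ h ∈ (H : Set G), n * h = g := by
      have hmem : g ∈ (↑(N ⊔ H) : Set G) := by rw [hG]; exact Set.mem_univ g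
      rw [Subgroup.normal_mul] at hmem
      exact hmem
    obtain ⟨n, hn, h, hh, hprod⟩ := hg
    refine ⟨h, hh, ?_⟩
    rw [← hprod, show n * h * h⁻¹ = n by group]
    exact hn
  choose hh hhH hhN using hdecomp
  choose tt ttH₀ ttχ using exists_t N χ H₀ hKnorm hstab
  have hpair : ∀ g : G, ((hh g, tt g) : G × G) ∈ Egrp N H hHab H₀ hH₀ χ := by
    intro g
    rw [mem_Egrp_iff]
    refine ⟨hhH g, ttH₀ g, ?_⟩
    have h1 : conjChar N χ (hh g) = conjChar N χ g := by
      conv_rhs => rw [show g = (g * (hh g)⁻¹) * hh g by group]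
      rw [conjChar_nmul N χ (hhN g)]
    show conjChar N χ (hh g) = conjChar N χ (tt g)
    rw [h1, ttχ g]
  refine ⟨{ toFun := fun g => extOp hKnorm ν g (hh g) (tt g) (hpair g) (hhN g),
            map_one' := ?_, map_mul' := ?_ }, ?_⟩
  · -- map_one
    have h1E : ((1, 1) : G × G) ∈ Egrp N H hHab H₀ hH₀ χ := (Egrp N H hHab H₀ hH₀ χ).one_mem
    have h1N : (1 : G) * (1 : G)⁻¹ ∈ N := by simpa using one_mem N
    show extOp hKnorm ν 1 (hh 1) (tt 1) (hpair 1) (hhN 1) = 1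
    rw [extOp_indep hKnorm ν hν hIrr 1 1 1 (hh 1) (tt 1) h1E (hpair 1) h1N (hhN 1)]
    apply LinearMap.ext
    intro f
    apply Subtype.ext
    funext k
    rw [extOp_apply]
    have hν1 : ν ⟨((1 : G), (1 : G)), h1E⟩ = 1 := by
      rw [show (⟨((1 : G), (1 : G)), h1E⟩ : ↥(Egrp N H hHab H₀ hH₀ χ)) = 1 from
        Subtype.ext rfl, map_one]
    have harg : (⟨(1 : G) * (1 : G)⁻¹ * (k : G) * 1,
        arg_mem hKnorm 1 1 1 ((mem_Egrp_iff ((1 : G), (1 : G))).mp h1E).2.1 h1N k⟩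
          : ↥(N ⊔ H₀)) = k := Subtype.ext (by group)
    rw [hν1, harg]
    simp
  · -- map_mul
    intro g₁ g₂
    have habm : ((hh g₁ * hh g₂, tt g₁ * tt g₂) : G × G) ∈ Egrp N H hHab H₀ hH₀ χ :=
      (Egrp N H hHab H₀ hH₀ χ).mul_mem (hpair g₁) (hpair g₂)
    have hNm : (g₁ * g₂) * (hh g₁ * hh g₂)⁻¹ ∈ N := by
      rw [show (g₁ * g₂) * (hh g₁ * hh g₂)⁻¹
        = (g₁ * (hh g₁)⁻¹) * (hh g₁ * (g₂ * (hh g₂)⁻¹) * (hh g₁)⁻¹) by group]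
      exact mul_mem (hhN g₁) ((‹N.Normal› : N.Normal).conj_mem _ (hhN g₂) (hh g₁))
    show extOp hKnorm ν (g₁ * g₂) (hh (g₁ * g₂)) (tt (g₁ * g₂)) (hpair (g₁ * g₂))
        (hhN (g₁ * g₂)) = _
    rw [extOp_indep hKnorm ν hν hIrr (g₁ * g₂) (hh g₁ * hh g₂) (tt g₁ * tt g₂)
      (hh (g₁ * g₂)) (tt (g₁ * g₂)) habm (hpair (g₁ * g₂)) hNm (hhN (g₁ * g₂))]
    apply LinearMap.ext
    intro f
    apply Subtype.ext
    funext k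
    have hRHS : ((extOp hKnorm ν g₁ (hh g₁) (tt g₁) (hpair g₁) (hhN g₁)
          * extOp hKnorm ν g₂ (hh g₂) (tt g₂) (hpair g₂) (hhN g₂)) f)
        = extOp hKnorm ν g₁ (hh g₁) (tt g₁) (hpair g₁) (hhN g₁)
            (extOp hKnorm ν g₂ (hh g₂) (tt g₂) (hpair g₂) (hhN g₂) f) := rfl
    rw [hRHS, extOp_apply, extOp_apply, extOp_apply]
    have hνm : ν ⟨(hh g₁ * hh g₂, tt g₁ * tt g₂), habm⟩
        = ν ⟨(hh g₁, tt g₁), hpair g₁⟩ * ν ⟨(hh g₂, tt g₂), hpair g₂⟩ := by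
      rw [show (⟨(hh g₁ * hh g₂, tt g₁ * tt g₂), habm⟩ : ↥(Egrp N H hHab H₀ hH₀ χ))
        = ⟨(hh g₁, tt g₁), hpair g₁⟩ * ⟨(hh g₂, tt g₂), hpair g₂⟩ from Subtype.ext rfl,
        map_mul]
    have hx : (tt g₂ * (hh g₂)⁻¹) * tt g₁ = tt g₁ * (tt g₂ * (hh g₂)⁻¹) :=
      hHab _ _ (mul_mem (hH₀ (ttH₀ g₂)) (inv_mem (hhH g₂))) (hH₀ (ttH₀ g₁))
    have hvals : (tt g₁ * tt g₂) * (hh g₁ * hh g₂)⁻¹ * (k : G) * (g₁ * g₂)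
        = tt g₂ * (hh g₂)⁻¹
          * ((tt g₁ * (hh g₁)⁻¹ * (k : G) * g₁)) * g₂ := by
      calc (tt g₁ * tt g₂) * (hh g₁ * hh g₂)⁻¹ * (k : G) * (g₁ * g₂)
          = (tt g₁ * (tt g₂ * (hh g₂)⁻¹)) * ((hh g₁)⁻¹ * (k : G) * g₁ * g₂) := by group
        _ = ((tt g₂ * (hh g₂)⁻¹) * tt g₁) * ((hh g₁)⁻¹ * (k : G) * g₁ * g₂) := by rw [hx]
        _ = tt g₂ * (hh g₂)⁻¹ * ((tt g₁ * (hh g₁)⁻¹ * (k : G) * g₁)) * g₂ := by group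
    have harg : (⟨(tt g₁ * tt g₂) * (hh g₁ * hh g₂)⁻¹ * (k : G) * (g₁ * g₂),
          arg_mem hKnorm (g₁ * g₂) (hh g₁ * hh g₂) (tt g₁ * tt g₂)
            ((mem_Egrp_iff (hh g₁ * hh g₂, tt g₁ * tt g₂)).mp habm).2.1 hNm k⟩
            : ↥(N ⊔ H₀))
        = ⟨tt g₂ * (hh g₂)⁻¹
            * ((⟨tt g₁ * (hh g₁)⁻¹ * (k : G) * g₁,
                arg_mem hKnorm g₁ (hh g₁) (tt g₁)
                  ((mem_Egrp_iff (hh g₁, tt g₁)).mp (hpair g₁)).2.1 (hhN g₁) k⟩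
                  : ↥(N ⊔ H₀)) : G) * g₂,
            arg_mem hKnorm g₂ (hh g₂) (tt g₂)
              ((mem_Egrp_iff (hh g₂, tt g₂)).mp (hpair g₂)).2.1 (hhN g₂) _⟩ := by
      apply Subtype.ext
      exact hvals
    rw [harg, hνm, Units.val_mul, mul_inv]
    ring
  · -- extension property
    intro k₀
    obtain ⟨n₀, hn₀, t₀, ht₀, hprod⟩ : ∃ n₀ ∈ (N : Set G), ∃ t₀ ∈ (H₀ : Set G),
        n₀ * t₀ = (k₀ : G) := by
      have : (k₀ : G) ∈ (↑(N ⊔ H₀) : Set G) := k₀.2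
      rw [Subgroup.normal_mul] at this
      exact this
    have habk : ((t₀, t₀) : G × G) ∈ Egrp N H hHab H₀ hH₀ χ :=
      (mem_Egrp_iff (t₀, t₀)).mpr ⟨hH₀ ht₀, ht₀, rfl⟩
    have hNk : (k₀ : G) * t₀⁻¹ ∈ N := by
      rw [← hprod, show n₀ * t₀ * t₀⁻¹ = n₀ by group]
      exact hn₀
    show extOp hKnorm ν (k₀ : G) (hh (k₀ : G)) (tt (k₀ : G)) (hpair (k₀ : G)) (hhN (k₀ : G))
      = indToJoin N H₀ χ k₀
    rw [extOp_indep hKnorm ν hν hIrr (k₀ : G) t₀ t₀ (hh (k₀ : G)) (tt (k₀ : G)) habk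
      (hpair (k₀ : G)) hNk (hhN (k₀ : G))]
    apply LinearMap.ext
    intro f
    apply Subtype.ext
    funext k
    rw [extOp_apply, indToJoin_apply N χ H₀ k₀ f k]
    have hFt : (⟨(t₀, t₀), habk⟩ : ↥(Egrp N H hHab H₀ hH₀ χ)) ∈ Fsub N H hHab H₀ hH₀ χ := by
      rw [mem_Fsub_iff]
      show t₀ * t₀⁻¹ ∈ N
      simpa using one_mem N
    have hν1 : ν ⟨(t₀, t₀), habk⟩ = 1 := by
      have h1 := hν ⟨⟨(t₀, t₀), habk⟩, hFt⟩
      have h3 : (⟨t₀ * t₀⁻¹, hFt⟩ : N) = 1 := Subtype.ext (mul_inv_cancel t₀)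
      calc ν ⟨(t₀, t₀), habk⟩ = (χ ⟨t₀ * t₀⁻¹, hFt⟩)⁻¹ := h1
        _ = (χ 1)⁻¹ := by rw [h3]
        _ = 1 := by rw [map_one, inv_one]
    have harg : (⟨t₀ * t₀⁻¹ * (k : G) * (k₀ : G),
        arg_mem hKnorm (k₀ : G) t₀ t₀ ((mem_Egrp_iff (t₀, t₀)).mp habk).2.1 hNk k⟩
          : ↥(N ⊔ H₀)) = k * k₀ := Subtype.ext (by push_cast; group)
    rw [hν1, harg]
    simp
end
end
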